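/- Let r ≥ 0 and let L^0 ⊋ L^1 ⊋ … ⊋ L^r ⊋ m_E·L^0 be O_E-lattices in E^n, and let μ be a norm on E^n. Then the following are equivalent: (i) for every pair (x, y) of nonzero elements of E^n, if μ_{L^i}(x) ≥ μ_{L^i}(y) for all 0 ≤ i ≤ r, then μ(x) ≥ μ(y); (ii) there exist real numbers a_0, …, a_r ≥ 0 such that μ(x) = Σ_{i=0}^r a_i·μ_{L^i}(x) for all x ∈ E^n. -/

import Mathlib

noncomputable section

open scoped Pointwise

/-- The data of a complete discrete valuation field `E` with finite residue field of
cardinality `q`, packaged via its standard absolute value `v : E → ℝ` (so `v π = q⁻¹` for a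
uniformizer `π`, `v 0 = 0`). -/
structure NonarchCDVF (E : Type*) [Field E] (q : ℕ) : Type _ where
  /-- the standard absolute value -/
  v : E → ℝ
  v_zero : v 0 = 0
  v_pos : ∀ x : E, x ≠ 0 → 0 < v x
  v_mul : ∀ x y : E, v (x * y) = v x * v y
  v_add : ∀ x y : E, v (x + y) ≤ max (v x) (v y)
  one_lt_q : 1 < q
  /-- the valuation is discrete with value group `q^ℤ` -/
  discrete : ∀ x : E, x ≠ 0 → ∃ m : ℤ, v x = (q : ℝ) ^ m
  exists_uniformizer : ∃ π : E, v π = (q : ℝ) ^ (-1 : ℤ)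
  /-- the residue field `O_E/m_E` is finite of cardinality `q` -/
  residue_card : ∃ S : Finset E, S.card = q ∧
    ∀ x : E, v x ≤ 1 → ∃! s, s ∈ S ∧ v (x - s) < 1
  /-- `E` is complete: every Cauchy sequence converges -/
  complete : ∀ f : ℕ → E,
    (∀ ε : ℝ, 0 < ε → ∃ N : ℕ, ∀ m ≥ N, ∀ k ≥ N, v (f m - f k) < ε) →
    ∃ l : E, ∀ ε : ℝ, 0 < ε → ∃ N : ℕ, ∀ m ≥ N, v (f m - l) < ε

namespace NonarchCDVF

variable {E : Type*} [Field E] {q : ℕ}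

/-- The `O_E`-submodule of `E^n` generated by a finite set `B`
(`O_E = {a : E | v a ≤ 1}` is the valuation ring). -/
def latticeOf (D : NonarchCDVF E q) {n : ℕ} (B : Finset (Fin n → E)) :
    Set (Fin n → E) :=
  {x | ∃ c : (Fin n → E) → E, (∀ b, D.v (c b) ≤ 1) ∧ x = ∑ b ∈ B, c b • b}

/-- An `O_E`-lattice in `E^n`: a finitely generated `O_E`-submodule of `E^n`
which spans `E^n` over `E`. -/
def IsLattice (D : NonarchCDVF E q) {n : ℕ} (L : Set (Fin n → E)) : Prop :=
  ∃ B : Finset (Fin n → E),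
    L = D.latticeOf B ∧ Submodule.span E (B : Set (Fin n → E)) = ⊤

/-- The norm associated to a lattice `L`: `μ_L(x) = min {v a : a ∈ E, x ∈ a • L}`. -/
def latticeNorm (D : NonarchCDVF E q) {n : ℕ} (L : Set (Fin n → E))
    (x : Fin n → E) : ℝ :=
  sInf {r : ℝ | ∃ a : E, D.v a = r ∧ ∃ y ∈ L, x = a • y}

/-- A norm on `E^n`. -/
def IsNorm (D : NonarchCDVF E q) {n : ℕ} (μ : (Fin n → E) → ℝ) : Prop :=
  (∀ (a : E) (x : Fin n → E), μ (a • x) = D.v a * μ x) ∧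
  (∀ x y : Fin n → E, μ (x + y) ≤ max (μ x) (μ y)) ∧
  (∀ x : Fin n → E, x ≠ 0 → 0 < μ x)

/-- The image `m_E • L` of a set `L ⊆ E^n` under the maximal ideal
`m_E = {a : E | v a < 1}`. -/
def maxIdealSmul (D : NonarchCDVF E q) {n : ℕ} (L : Set (Fin n → E)) :
    Set (Fin n → E) :=
  {z | ∃ a : E, D.v a < 1 ∧ ∃ y ∈ L, z = a • y}

end NonarchCDVF
namespace NonarchCDVF

variable {E : Type*} [Field E] {q : ℕ} (D : NonarchCDVF E q)

theorem v_nonneg (x : E) : 0 ≤ D.v x := by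
  rcases eq_or_ne x 0 with h | h
  · simp [h, D.v_zero]
  · exact (D.v_pos x h).le

theorem v_one' : D.v 1 = 1 := by
  have h := D.v_mul 1 1
  rw [one_mul] at h
  have h1 := D.v_pos 1 one_ne_zero
  nlinarith

theorem v_inv' {a : E} (ha : a ≠ 0) : D.v a⁻¹ = (D.v a)⁻¹ := by
  have h := D.v_mul a a⁻¹
  rw [mul_inv_cancel₀ ha, D.v_one'] at h
  exact eq_inv_of_mul_eq_one_right h.symm

include D in
theorem one_lt_qR : (1 : ℝ) < q := by
  have := D.one_lt_q
  exact_mod_cast this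

include D in
theorem q_pos' : (0 : ℝ) < q := lt_trans one_pos D.one_lt_qR

theorem v_zpow' {a : E} (ha : a ≠ 0) (m : ℤ) : D.v (a ^ m) = D.v a ^ m := by
  have hpow : ∀ k : ℕ, D.v (a ^ k) = D.v a ^ k := by
    intro k
    induction k with
    | zero => simpa using D.v_one'
    | succ k ih => rw [pow_succ, pow_succ, D.v_mul, ih]
  rcases m with k | k
  · simpa using hpow k
  · rw [zpow_negSucc, zpow_negSucc, D.v_inv' (pow_ne_zero _ ha), hpow]

/-- a nonzero uniformizer -/
theorem exists_unif : ∃ π : E, π ≠ 0 ∧ ∀ m : ℤ, D.v (π ^ m) = (q : ℝ) ^ (-m) := by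
  obtain ⟨π, hπ⟩ := D.exists_uniformizer
  have hq : (0:ℝ) < q := D.q_pos'
  have hne : π ≠ 0 := by
    intro h
    rw [h, D.v_zero] at hπ
    have : (0:ℝ) < (q:ℝ) ^ (-1 : ℤ) := zpow_pos hq _
    linarith
  refine ⟨π, hne, fun m => ?_⟩
  rw [D.v_zpow' hne, hπ, ← zpow_mul]
  ring_nf

theorem v_sum_le {ι : Type*} (s : Finset ι) (f : ι → E) {M : ℝ} (hM : 0 ≤ M)
    (h : ∀ i ∈ s, D.v (f i) ≤ M) : D.v (∑ i ∈ s, f i) ≤ M := by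
  induction s using Finset.cons_induction with
  | empty => simpa [D.v_zero] using hM
  | cons a s hnot ih =>
    rw [Finset.sum_cons]
    refine le_trans (D.v_add _ _) (max_le (h a (Finset.mem_cons_self a s)) ?_)
    exact ih fun i hi => h i (Finset.mem_cons_of_mem hi)

end NonarchCDVF
namespace NonarchCDVF

variable {E : Type*} [Field E] {q : ℕ} (D : NonarchCDVF E q) {n : ℕ}

theorem zero_mem_lattice {L : Set (Fin n → E)} (hL : D.IsLattice L) : (0 : Fin n → E) ∈ L := by
  obtain ⟨B, rfl, -⟩ := hL
  exact ⟨0, fun b => by simp [D.v_zero], by simp⟩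

theorem smul_mem_lattice {L : Set (Fin n → E)} (hL : D.IsLattice L) {a : E} (ha : D.v a ≤ 1)
    {x : Fin n → E} (hx : x ∈ L) : a • x ∈ L := by
  obtain ⟨B, rfl, -⟩ := hL
  obtain ⟨c, hc, rfl⟩ := hx
  refine ⟨fun b => a * c b, fun b => ?_, ?_⟩
  · rw [D.v_mul]
    calc D.v a * D.v (c b) ≤ 1 * 1 :=
      mul_le_mul ha (hc b) (D.v_nonneg _) zero_le_one
    _ = 1 := one_mul 1
  · rw [Finset.smul_sum]
    exact Finset.sum_congr rfl fun b _ => by rw [smul_smul]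

/-- Lattices are bounded: coordinates of lattice elements have bounded valuation. -/
theorem lattice_bounded {L : Set (Fin n → E)} (hL : D.IsLattice L) :
    ∃ M : ℝ, 0 < M ∧ ∀ y ∈ L, ∀ j, D.v (y j) ≤ M := by
  obtain ⟨B, rfl, -⟩ := hL
  classical
  obtain ⟨M, hM0, hM⟩ : ∃ M : ℝ, 0 < M ∧ ∀ b ∈ B, ∀ j, D.v (b j) ≤ M := by
    refine ⟨1 + ∑ b ∈ B, ∑ j, D.v (b j), ?_, ?_⟩
    · have : (0:ℝ) ≤ ∑ b ∈ B, ∑ j, D.v (b j) :=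
        Finset.sum_nonneg fun b _ => Finset.sum_nonneg fun j _ => D.v_nonneg _
      linarith
    · intro b hb j
      have h1 : D.v (b j) ≤ ∑ j, D.v (b j) :=
        Finset.single_le_sum (fun j _ => D.v_nonneg _) (Finset.mem_univ j)
      have h2 : ∑ j, D.v (b j) ≤ ∑ b ∈ B, ∑ j, D.v (b j) :=
        Finset.single_le_sum (f := fun c => ∑ j, D.v (c j))
          (fun c _ => Finset.sum_nonneg fun j _ => D.v_nonneg _) hb
      linarith
  refine ⟨M, hM0, ?_⟩
  rintro y ⟨c, hc, rfl⟩ j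
  have : (∑ b ∈ B, c b • b) j = ∑ b ∈ B, c b * b j := by
    simp [Finset.sum_apply]
  rw [this]
  refine D.v_sum_le _ _ hM0.le fun b hb => ?_
  rw [D.v_mul]
  calc D.v (c b) * D.v (b j) ≤ 1 * M :=
    mul_le_mul (hc b) (hM b hb j) (D.v_nonneg _) zero_le_one
  _ = M := one_mul M

end NonarchCDVF
namespace NonarchCDVF

variable {E : Type*} [Field E] {q : ℕ} (D : NonarchCDVF E q) {n : ℕ}

/-- The set whose infimum is the lattice norm. -/
def normSet (L : Set (Fin n → E)) (x : Fin n → E) : Set ℝ :=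
  {r : ℝ | ∃ a : E, D.v a = r ∧ ∃ y ∈ L, x = a • y}

theorem latticeNorm_eq_sInf (L : Set (Fin n → E)) (x : Fin n → E) :
    D.latticeNorm L x = sInf (D.normSet L x) := rfl

theorem exists_mem_normSet {L : Set (Fin n → E)} (hL : D.IsLattice L) (x : Fin n → E) :
    ∃ N : ℕ, ((q : ℝ) ^ (N : ℤ)) ∈ D.normSet L x := by
  classical
  obtain ⟨B, hLB, hspan⟩ := hL
  obtain ⟨π, hπ0, hπ⟩ := D.exists_unif
  have hx : x ∈ Submodule.span E (B : Set (Fin n → E)) := hspan ▸ Submodule.mem_top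
  obtain ⟨f, -, hf⟩ := Submodule.mem_span_finset.1 hx
  -- choose N with v (f b) ≤ q ^ N for all b ∈ B
  obtain ⟨N, hN⟩ : ∃ N : ℕ, ∀ b ∈ B, D.v (f b) ≤ (q : ℝ) ^ (N : ℤ) := by
    obtain ⟨N, hN⟩ := pow_unbounded_of_one_lt (∑ b ∈ B, D.v (f b)) D.one_lt_qR
    refine ⟨N, fun b hb => ?_⟩
    have h1 : D.v (f b) ≤ ∑ b ∈ B, D.v (f b) :=
      Finset.single_le_sum (f := fun c => D.v (f c)) (fun c _ => D.v_nonneg _) hb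
    rw [zpow_natCast]
    linarith
  refine ⟨N, π ^ (-(N:ℤ)), by rw [hπ, neg_neg], π ^ (N:ℤ) • x, ?_, ?_⟩
  · rw [hLB]
    refine ⟨fun b => if b ∈ B then π ^ (N:ℤ) * f b else 0, fun b => ?_, ?_⟩
    · beta_reduce
      by_cases hb : b ∈ B
      · rw [if_pos hb, D.v_mul, hπ]
        have := hN b hb
        have hq1 : (1:ℝ) < q := D.one_lt_qR
        have : (q:ℝ) ^ (-(N:ℤ)) * D.v (f b) ≤ (q:ℝ) ^ (-(N:ℤ)) * (q:ℝ) ^ (N:ℤ) :=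
          mul_le_mul_of_nonneg_left this (zpow_nonneg (by linarith) _)
        rwa [← zpow_add₀ (by linarith : (q:ℝ) ≠ 0), neg_add_cancel, zpow_zero] at this
      · rw [if_neg hb, D.v_zero]; exact zero_le_one
    · rw [← hf, Finset.smul_sum]
      exact Finset.sum_congr rfl fun b hb => by simp only [if_pos hb, smul_smul]
  · rw [smul_smul, ← zpow_add₀ hπ0, neg_add_cancel, zpow_zero, one_smul]

end NonarchCDVF
namespace NonarchCDVF

variable {E : Type*} [Field E] {q : ℕ} (D : NonarchCDVF E q) {n : ℕ}

theorem exists_isLeast {L : Set (Fin n → E)} (hL : D.IsLattice L) {x : Fin n → E}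
    (hx : x ≠ 0) : ∃ k : ℤ, IsLeast (D.normSet L x) ((q : ℝ) ^ k) ∧
      D.latticeNorm L x = (q : ℝ) ^ k := by
  classical
  have hq1 : (1:ℝ) < q := D.one_lt_qR
  have hq0 : (0:ℝ) < q := D.q_pos'
  obtain ⟨M, hM0, hM⟩ := D.lattice_bounded hL
  obtain ⟨j0, hj0⟩ : ∃ j, x j ≠ 0 := by
    by_contra h
    push_neg at h
    exact hx (funext h)
  -- every element of normSet is q^k for some k, with q^k ≥ v(x j0)/M
  have hstruct : ∀ r ∈ D.normSet L x, ∃ k : ℤ, r = (q:ℝ)^k ∧ D.v (x j0) / M ≤ (q:ℝ)^k := by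
    rintro r ⟨a, rfl, y, hy, rfl⟩
    have ha : a ≠ 0 := by
      rintro rfl
      exact hx (by simp)
    obtain ⟨k, hk⟩ := D.discrete a ha
    refine ⟨k, hk, ?_⟩
    have hxy : (a • y) j0 = a * y j0 := rfl
    have h1 : D.v ((a • y) j0) ≤ D.v a * M := by
      rw [hxy, D.v_mul]
      exact mul_le_mul_of_nonneg_left (hM y hy j0) (D.v_nonneg a)
    rw [← hk]
    rw [div_le_iff₀ hM0]
    exact h1
  -- lower bound on exponents
  obtain ⟨N0, hN0⟩ := pow_unbounded_of_one_lt (M / D.v (x j0)) hq1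
  have hxj0 : 0 < D.v (x j0) := D.v_pos _ hj0
  have hklb : ∀ k : ℤ, (D.v (x j0) / M ≤ (q:ℝ)^k) → -(N0:ℤ) ≤ k := by
    intro k hk
    by_contra hlt
    push_neg at hlt
    have h1 : (q:ℝ)^k < (q:ℝ)^(-(N0:ℤ)) := zpow_lt_zpow_right₀ hq1 hlt
    have h2 : (q:ℝ)^(-(N0:ℤ)) = ((q:ℝ)^(N0:ℤ))⁻¹ := by rw [zpow_neg]
    have h3 : (q:ℝ)^(N0:ℤ) = (q:ℝ)^N0 := zpow_natCast _ _
    have h4 : D.v (x j0) / M ≤ (q:ℝ)^k := hk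
    have h5 : M / D.v (x j0) < (q:ℝ)^N0 := hN0
    have hMpos := hM0
    have hpow : (0:ℝ) < (q:ℝ)^N0 := pow_pos hq0 _
    rw [h2, h3] at h1
    have : D.v (x j0) / M ≤ ((q:ℝ)^N0)⁻¹ := le_of_lt (lt_of_le_of_lt h4 h1)
    rw [le_inv_comm₀ (by positivity) hpow, inv_div] at this
    linarith
  -- the set of exponents
  set T : Set ℤ := {k : ℤ | (q:ℝ)^k ∈ D.normSet L x} with hT
  have hTne : T.Nonempty := by
    obtain ⟨N, hN⟩ := D.exists_mem_normSet hL x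
    exact ⟨(N:ℤ), hN⟩
  have hTlb : ∀ k ∈ T, -(N0:ℤ) ≤ k := by
    intro k hk
    obtain ⟨k', hk', hge⟩ := hstruct _ hk
    have : k = k' := by
      have := zpow_right_injective₀ (by linarith : (0:ℝ) < q) (by linarith : (q:ℝ) ≠ 1) hk'
      exact this
    exact this ▸ hklb k' hge
  have hlb' : ∃ b : ℤ, ∀ z : ℤ, z ∈ T → b ≤ z := ⟨-(N0:ℤ), hTlb⟩
  obtain ⟨k0, hk0mem, hk0min⟩ := Int.exists_least_of_bdd hlb' hTne
  refine ⟨k0, ⟨hk0mem, ?_⟩, ?_⟩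
  · rintro r hr
    obtain ⟨k, rfl, -⟩ := hstruct r hr
    exact zpow_le_zpow_right₀ hq1.le (hk0min k hr)
  · refine le_antisymm (csInf_le ⟨(q:ℝ)^(-(N0:ℤ)), ?_⟩ hk0mem) (le_csInf ⟨_, hk0mem⟩ ?_)
    · rintro r hr
      obtain ⟨k, rfl, hge⟩ := hstruct r hr
      exact zpow_le_zpow_right₀ hq1.le (hklb k hge)
    · rintro r hr
      obtain ⟨k, rfl, -⟩ := hstruct r hr
      exact zpow_le_zpow_right₀ hq1.le (hk0min k hr)

end NonarchCDVF
namespace NonarchCDVF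

variable {E : Type*} [Field E] {q : ℕ} (D : NonarchCDVF E q) {n : ℕ}

theorem latticeNorm_zero {L : Set (Fin n → E)} (hL : D.IsLattice L) :
    D.latticeNorm L 0 = 0 := by
  have h : IsLeast (D.normSet L (0 : Fin n → E)) 0 := by
    constructor
    · exact ⟨0, D.v_zero, 0, D.zero_mem_lattice hL, by simp⟩
    · rintro r ⟨a, rfl, y, hy, h⟩
      exact D.v_nonneg a
  exact h.csInf_eq

theorem latticeNorm_pos {L : Set (Fin n → E)} (hL : D.IsLattice L) {x : Fin n → E}
    (hx : x ≠ 0) : 0 < D.latticeNorm L x := by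
  obtain ⟨k, -, heq⟩ := D.exists_isLeast hL hx
  rw [heq]
  exact zpow_pos D.q_pos' _

theorem latticeNorm_exists_zpow {L : Set (Fin n → E)} (hL : D.IsLattice L) {x : Fin n → E}
    (hx : x ≠ 0) : ∃ k : ℤ, D.latticeNorm L x = (q : ℝ) ^ k := by
  obtain ⟨k, -, heq⟩ := D.exists_isLeast hL hx
  exact ⟨k, heq⟩

theorem latticeNorm_isLeast {L : Set (Fin n → E)} (hL : D.IsLattice L) {x : Fin n → E}
    (hx : x ≠ 0) : IsLeast (D.normSet L x) (D.latticeNorm L x) := by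
  obtain ⟨k, hle, heq⟩ := D.exists_isLeast hL hx
  rw [heq]; exact hle

theorem latticeNorm_mem (L : Set (Fin n → E)) {x : Fin n → E} {a : E}
    (ha : D.v a = D.latticeNorm L x) : True := trivial

/-- attainment: there are `a, y` with `x = a • y`, `y ∈ L`, `v a = latticeNorm`. -/
theorem latticeNorm_attained {L : Set (Fin n → E)} (hL : D.IsLattice L) {x : Fin n → E}
    (hx : x ≠ 0) : ∃ a : E, D.v a = D.latticeNorm L x ∧ ∃ y ∈ L, x = a • y :=
  (D.latticeNorm_isLeast hL hx).1

theorem latticeNorm_le_of_mem_normSet {L : Set (Fin n → E)} (hL : D.IsLattice L)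
    {x : Fin n → E} (hx : x ≠ 0) {r : ℝ} (hr : r ∈ D.normSet L x) :
    D.latticeNorm L x ≤ r :=
  (D.latticeNorm_isLeast hL hx).2 hr

theorem mem_lattice_iff {L : Set (Fin n → E)} (hL : D.IsLattice L) {x : Fin n → E} :
    x ∈ L ↔ D.latticeNorm L x ≤ 1 := by
  rcases eq_or_ne x 0 with rfl | hx
  · simp [D.latticeNorm_zero hL, D.zero_mem_lattice hL]
  · constructor
    · intro hmem
      exact D.latticeNorm_le_of_mem_normSet hL hx ⟨1, D.v_one', x, hmem, (one_smul E x).symm⟩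
    · intro hle
      obtain ⟨a, ha, y, hy, rfl⟩ := D.latticeNorm_attained hL hx
      exact D.smul_mem_lattice hL (ha ▸ hle) hy

theorem latticeNorm_mono {L L' : Set (Fin n → E)} (hL : D.IsLattice L) (hL' : D.IsLattice L')
    (hsub : L ⊆ L') (x : Fin n → E) : D.latticeNorm L' x ≤ D.latticeNorm L x := by
  rcases eq_or_ne x 0 with rfl | hx
  · rw [D.latticeNorm_zero hL, D.latticeNorm_zero hL']
  · obtain ⟨a, ha, y, hy, rfl⟩ := D.latticeNorm_attained hL hx
    exact ha ▸ D.latticeNorm_le_of_mem_normSet hL' hx ⟨a, rfl, y, hsub hy, rfl⟩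

theorem latticeNorm_smul {L : Set (Fin n → E)} (hL : D.IsLattice L) {a : E} (ha : a ≠ 0)
    (x : Fin n → E) : D.latticeNorm L (a • x) = D.v a * D.latticeNorm L x := by
  rcases eq_or_ne x 0 with rfl | hx
  · rw [smul_zero, D.latticeNorm_zero hL, mul_zero]
  · have hax : a • x ≠ 0 := smul_ne_zero ha hx
    have hva : 0 < D.v a := D.v_pos a ha
    have h : IsLeast (D.normSet L (a • x)) (D.v a * D.latticeNorm L x) := by
      constructor
      · obtain ⟨b, hb, y, hy, hxy⟩ := D.latticeNorm_attained hL hx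
        exact ⟨a * b, by rw [D.v_mul, hb], y, hy, by rw [hxy, smul_smul]⟩
      · rintro r ⟨c, rfl, y, hy, hcy⟩
        have hxc : x = (a⁻¹ * c) • y := by
          rw [mul_smul, ← hcy, ← mul_smul, inv_mul_cancel₀ ha, one_smul]
        have := D.latticeNorm_le_of_mem_normSet hL hx ⟨a⁻¹ * c, rfl, y, hy, hxc⟩
        rw [D.v_mul, D.v_inv' ha] at this
        calc D.v a * D.latticeNorm L x ≤ D.v a * ((D.v a)⁻¹ * D.v c) :=
          mul_le_mul_of_nonneg_left this hva.le
        _ = D.v c := by field_simp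
    exact h.csInf_eq

/-- If `maxIdealSmul L₀ ⊆ L'`, then `ν_{L'} ≤ q · ν_{L₀}`. -/
theorem latticeNorm_le_q_mul {L₀ L' : Set (Fin n → E)} (hL₀ : D.IsLattice L₀)
    (hL' : D.IsLattice L') (hsub : D.maxIdealSmul L₀ ⊆ L') (x : Fin n → E) :
    D.latticeNorm L' x ≤ q * D.latticeNorm L₀ x := by
  rcases eq_or_ne x 0 with rfl | hx
  · rw [D.latticeNorm_zero hL₀, D.latticeNorm_zero hL', mul_zero]
  · obtain ⟨π, hπ0, hπ⟩ := D.exists_unif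
    obtain ⟨a, ha, y, hy, rfl⟩ := D.latticeNorm_attained hL₀ hx
    have hvπ : D.v π = ((q:ℝ))⁻¹ := by simpa using hπ 1
    have hπy : π • y ∈ L' := by
      refine hsub ⟨π, ?_, y, hy, rfl⟩
      rw [hvπ, inv_lt_one_iff₀]
      right; exact D.one_lt_qR
    have key : (a * π⁻¹) • (π • y) = a • y := by
      rw [smul_smul, mul_assoc, inv_mul_cancel₀ hπ0, mul_one]
    have hmem : D.v (a * π⁻¹) ∈ D.normSet L' (a • y) :=
      ⟨a * π⁻¹, rfl, π • y, hπy, key.symm⟩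
    have hval : D.v (a * π⁻¹) = D.v a * q := by
      rw [D.v_mul, D.v_inv' hπ0, hvπ, inv_inv]
    have := D.latticeNorm_le_of_mem_normSet hL' hx hmem
    rw [hval, ha] at this
    linarith [this]

/-- If `x ∉ maxIdealSmul L₀` then `1/q < ν_{L₀} x`, hence `1 ≤ ν_{L₀} x`. -/
theorem one_le_latticeNorm_of_not_mem {L₀ : Set (Fin n → E)} (hL₀ : D.IsLattice L₀)
    {x : Fin n → E} (hx : x ∉ D.maxIdealSmul L₀) : 1 ≤ D.latticeNorm L₀ x := by
  have hx0 : x ≠ 0 := by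
    rintro rfl
    exact hx ⟨0, by rw [D.v_zero]; exact one_pos, 0, D.zero_mem_lattice hL₀, by simp⟩
  obtain ⟨k, hk⟩ := D.latticeNorm_exists_zpow hL₀ hx0
  by_contra hlt
  push_neg at hlt
  -- then k ≤ -1, so latticeNorm < 1, and the attained a has v a < 1
  obtain ⟨a, ha, y, hy, rfl⟩ := D.latticeNorm_attained hL₀ hx0
  exact hx ⟨a, ha ▸ hlt, y, hy, rfl⟩

end NonarchCDVF
/-- Let `L^0 ⊋ L^1 ⊋ … ⊋ L^r ⊋ m_E·L^0` be `O_E`-lattices in `E^n` and `μ`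
a norm on `E^n`.  Then: (i) `μ` respects all the inequalities between lattice norms of the
`L^i` iff (ii) `μ` is a nonnegative linear combination of the norms `μ_{L^i}`. -/
theorem statement3 {E : Type*} [Field E] {q : ℕ} (D : NonarchCDVF E q) (n : ℕ) (hn : 1 ≤ n)
    (r : ℕ) (L : Fin (r + 1) → Set (Fin n → E))
    (hlat : ∀ i, D.IsLattice (L i))
    (hchain : ∀ i : Fin r, L i.succ ⊂ L i.castSucc)
    (hlast : D.maxIdealSmul (L 0) ⊂ L (Fin.last r))
    (μ : (Fin n → E) → ℝ) (hμ : D.IsNorm μ) :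
    (∀ x y : Fin n → E, x ≠ 0 → y ≠ 0 →
        (∀ i, D.latticeNorm (L i) y ≤ D.latticeNorm (L i) x) → μ y ≤ μ x) ↔
      (∃ a : Fin (r + 1) → ℝ, (∀ i, 0 ≤ a i) ∧
        ∀ x : Fin n → E, μ x = ∑ i, a i * D.latticeNorm (L i) x) := by
  classical
  obtain ⟨hμ_smul, hμ_add, hμ_pos⟩ := hμ
  have hq1 : (1:ℝ) < q := D.one_lt_qR
  have hq0 : (0:ℝ) < q := D.q_pos'
  have hqne : (q:ℝ) - 1 ≠ 0 := by linarith
  obtain ⟨π, hπ0, hπ⟩ := D.exists_unif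
  set ν : Fin (r+1) → (Fin n → E) → ℝ := fun i x => D.latticeNorm (L i) x with hνdef
  -- chain monotonicity
  have hmono : ∀ i j : Fin (r+1), i ≤ j → L j ⊆ L i := by
    have key : ∀ k : ℕ, ∀ _ : k ≤ r, ∀ i : ℕ, ∀ _ : i ≤ k,
        L ⟨k, by omega⟩ ⊆ L ⟨i, by omega⟩ := by
      intro k
      induction k with
      | zero =>
        intro hk i hi
        obtain rfl : i = 0 := by omega
        exact subset_rfl
      | succ k ih =>
        intro hk i hi
        have h1 : L ⟨k+1, by omega⟩ ⊆ L ⟨k, by omega⟩ := by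
          have h := (hchain ⟨k, by omega⟩).subset
          have e1 : (⟨k, by omega⟩ : Fin r).succ = (⟨k+1, by omega⟩ : Fin (r+1)) := rfl
          have e2 : (⟨k, by omega⟩ : Fin r).castSucc = (⟨k, by omega⟩ : Fin (r+1)) := rfl
          rw [e1, e2] at h
          exact h
        rcases Nat.eq_or_lt_of_le hi with he | hlt
        · obtain rfl : i = k + 1 := he
          exact subset_rfl
        · exact h1.trans (ih (by omega) i (by omega))
    intro i j hij
    have h := key j.val (by omega) i.val (by omega)
    simpa using h
  have hν_mono : ∀ (x : Fin n → E) (i j : Fin (r+1)), i ≤ j → ν i x ≤ ν j x :=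
    fun x i j hij => D.latticeNorm_mono (hlat j) (hlat i) (hmono i j hij) x
  have hν_le_q : ∀ (x : Fin n → E) (i : Fin (r+1)), ν i x ≤ q * ν 0 x := by
    intro x i
    have h1 : ν i x ≤ ν (Fin.last r) x := hν_mono x i (Fin.last r) (Fin.le_last i)
    have h2 : ν (Fin.last r) x ≤ q * ν 0 x :=
      D.latticeNorm_le_q_mul (hlat 0) (hlat (Fin.last r)) hlast.subset x
    linarith
  have hμ0 : μ 0 = 0 := by
    have h := hμ_smul 0 0
    rw [smul_zero, D.v_zero, zero_mul] at h
    exact h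
  -- Step A: representatives
  have hrep : ∀ t : Fin (r+1), ∃ x : Fin n → E, x ≠ 0 ∧
      ∀ i : Fin (r+1), ν i x = (if i ≤ t then (1:ℝ) else q) := by
    intro t
    rcases eq_or_ne t (Fin.last r) with rfl | htne
    · obtain ⟨x, hxmem, hxnot⟩ := Set.exists_of_ssubset hlast
      have h1 : 1 ≤ ν 0 x := D.one_le_latticeNorm_of_not_mem (hlat 0) hxnot
      have hx0 : x ≠ 0 := by
        rintro rfl
        rw [show ν 0 (0 : Fin n → E) = 0 from D.latticeNorm_zero (hlat 0)] at h1
        linarith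
      refine ⟨x, hx0, fun i => ?_⟩
      rw [if_pos (Fin.le_last i)]
      have hle : ν i x ≤ 1 :=
        (D.mem_lattice_iff (hlat i)).1 (hmono i (Fin.last r) (Fin.le_last i) hxmem)
      have hge : 1 ≤ ν i x := le_trans h1 (hν_mono x 0 i (Fin.zero_le i))
      linarith
    · have htlt : t.val < r := by
        rcases lt_or_eq_of_le (Nat.lt_succ_iff.1 t.isLt) with h | h
        · exact h
        · exact absurd (Fin.ext h : t = Fin.last r) htne
      set t' : Fin r := ⟨t.val, htlt⟩ with ht'
      obtain ⟨x, hxmem, hxnot⟩ := Set.exists_of_ssubset (hchain t')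
      have hcast : t'.castSucc = t := by ext; rfl
      rw [hcast] at hxmem
      set s : Fin (r+1) := t'.succ with hs
      have hsval : s.val = t.val + 1 := rfl
      have hx0 : x ≠ 0 := by
        rintro rfl
        exact hxnot (D.zero_mem_lattice (hlat s))
      -- ν s x > 1 hence ≥ q
      have hsgt : 1 < ν s x := by
        by_contra h
        push_neg at h
        exact hxnot ((D.mem_lattice_iff (hlat s)).2 h)
      have hsq : (q:ℝ) ≤ ν s x := by
        obtain ⟨k, hk⟩ := D.latticeNorm_exists_zpow (hlat s) hx0
        have hkν : ν s x = (q:ℝ)^k := hk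
        rw [hkν] at hsgt ⊢
        have hkpos : 0 < k := by
          by_contra hkn
          push_neg at hkn
          have := zpow_le_one_of_nonpos₀ hq1.le hkn
          linarith
        calc (q:ℝ) = (q:ℝ) ^ (1:ℤ) := (zpow_one _).symm
        _ ≤ (q:ℝ)^k := zpow_le_zpow_right₀ hq1.le hkpos
      -- ν 0 x = 1
      have h0le : ν 0 x ≤ 1 := (D.mem_lattice_iff (hlat 0)).1 (hmono 0 t (Fin.zero_le t) hxmem)
      have h0ge : 1 ≤ ν 0 x := by
        have := hν_le_q x s
        nlinarith
      have h0 : ν 0 x = 1 := le_antisymm h0le h0ge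
      refine ⟨x, hx0, fun i => ?_⟩
      by_cases hit : i ≤ t
      · rw [if_pos hit]
        have hle : ν i x ≤ 1 := (D.mem_lattice_iff (hlat i)).1 (hmono i t hit hxmem)
        have hge : 1 ≤ ν i x := h0 ▸ hν_mono x 0 i (Fin.zero_le i)
        linarith
      · rw [if_neg hit]
        have hsi : s ≤ i := by
          rw [Fin.le_def, hsval]
          rw [Fin.le_def] at hit
          omega
        have hge : (q:ℝ) ≤ ν i x := le_trans hsq (hν_mono x s i hsi)
        have hle : ν i x ≤ q * 1 := h0 ▸ hν_le_q x i
        linarith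
  -- Step B: classification
  have hclass : ∀ x : Fin n → E, x ≠ 0 → ∃ m : ℤ, ∃ t : Fin (r+1),
      ∀ i, ν i x = (q:ℝ)^m * (if i ≤ t then (1:ℝ) else q) := by
    intro x hx
    obtain ⟨m, hm⟩ := D.latticeNorm_exists_zpow (hlat 0) hx
    set T : Finset (Fin (r+1)) := Finset.univ.filter (fun i => ν i x ≤ (q:ℝ)^m) with hT
    have h0T : (0 : Fin (r+1)) ∈ T := by
      simp only [hT, Finset.mem_filter, Finset.mem_univ, true_and]
      exact le_of_eq hm
    set t := T.max' ⟨0, h0T⟩ with ht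
    refine ⟨m, t, fun i => ?_⟩
    have htT : t ∈ T := T.max'_mem _
    have htle : ν t x ≤ (q:ℝ)^m := by
      simp only [hT, Finset.mem_filter] at htT
      exact htT.2
    by_cases hit : i ≤ t
    · rw [if_pos hit, mul_one]
      have h1 : ν i x ≤ ν t x := hν_mono x i t hit
      have h2 : (q:ℝ)^m ≤ ν i x := hm ▸ hν_mono x 0 i (Fin.zero_le i)
      linarith
    · rw [if_neg hit]
      have hiT : i ∉ T := fun h => hit (T.le_max' i h)
      have hgt : (q:ℝ)^m < ν i x := by
        simp only [hT, Finset.mem_filter, Finset.mem_univ, true_and] at hiT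
        push_neg at hiT
        exact hiT
      obtain ⟨k, hk⟩ := D.latticeNorm_exists_zpow (hlat i) hx
      rw [hνdef] at hgt ⊢
      simp only at hgt ⊢
      rw [hk] at hgt ⊢
      have hmk : m < k := by
        by_contra h
        push_neg at h
        exact absurd (zpow_le_zpow_right₀ hq1.le h) (not_le.2 hgt)
      have hle : (q:ℝ)^k ≤ (q:ℝ)^(m+1) := by
        have h2 : D.latticeNorm (L i) x ≤ q * D.latticeNorm (L 0) x := hν_le_q x i
        rw [hk, hm] at h2
        calc (q:ℝ)^k ≤ q * (q:ℝ)^m := h2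
        _ = (q:ℝ)^(m+1) := by rw [zpow_add₀ (by linarith : (q:ℝ) ≠ 0), zpow_one]; ring
      have hge : (q:ℝ)^(m+1) ≤ (q:ℝ)^k := zpow_le_zpow_right₀ hq1.le (by omega)
      have : (q:ℝ)^k = (q:ℝ)^(m+1) := le_antisymm hle hge
      rw [this, zpow_add₀ (by linarith : (q:ℝ) ≠ 0), zpow_one]
  constructor
  · -- hard direction
    intro hcomp
    choose X hX0 hXν using hrep
    set C : Fin (r+1) → ℝ := fun t => μ (X t) with hC
    set CN : ℕ → ℝ := fun k => C ⟨min k r, by omega⟩ with hCN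
    set A : ℕ → ℝ := fun k => if k = 0 then (q * CN r - CN 0)/((q:ℝ)-1)
      else (CN (k-1) - CN k)/((q:ℝ)-1) with hA
    have hCNval : ∀ k : ℕ, ∀ _ : k ≤ r, CN k = C ⟨k, by omega⟩ := by
      intro k hk
      simp only [hCN]
      congr 1
      ext
      simp [Nat.min_eq_left hk]
    -- C is antitone along consecutive indices
    have hCmono : ∀ k : ℕ, k + 1 ≤ r → CN (k+1) ≤ CN k := by
      intro k hk
      rw [hCNval (k+1) hk, hCNval k (by omega)]
      refine hcomp (X ⟨k, by omega⟩) (X ⟨k+1, by omega⟩) (hX0 _) (hX0 _) ?_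
      intro i
      rw [show D.latticeNorm (L i) (X ⟨k+1, by omega⟩) = ν i (X ⟨k+1, by omega⟩) from rfl]
      rw [show D.latticeNorm (L i) (X ⟨k, by omega⟩) = ν i (X ⟨k, by omega⟩) from rfl]
      rw [hXν _ i, hXν _ i]
      by_cases h1 : i ≤ (⟨k, by omega⟩ : Fin (r+1))
      · rw [if_pos h1, if_pos (le_trans h1 (Fin.mk_le_mk.mpr (by omega)))]
      · rw [if_neg h1]
        by_cases h2 : i ≤ (⟨k+1, by omega⟩ : Fin (r+1))
        · rw [if_pos h2]; linarith
        · rw [if_neg h2]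
    have hClast : CN 0 ≤ q * CN r := by
      rw [hCNval 0 (by omega), hCNval r le_rfl]
      have hπinv : D.v (π ^ (-1:ℤ)) = (q:ℝ) := by
        rw [hπ]; simp
      set z := (π ^ (-1:ℤ)) • X ⟨r, by omega⟩ with hz
      have hz0 : z ≠ 0 := smul_ne_zero (zpow_ne_zero _ hπ0) (hX0 _)
      have hμz : μ z = q * C ⟨r, by omega⟩ := by
        rw [hz, hμ_smul, hπinv]
      rw [← hμz]
      refine hcomp z (X ⟨0, by omega⟩) hz0 (hX0 _) ?_
      intro i
      have hνz : D.latticeNorm (L i) z = q * ν i (X ⟨r, by omega⟩) := by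
        rw [hz, D.latticeNorm_smul (hlat i) (zpow_ne_zero _ hπ0), hπinv]
      rw [hνz, hXν _ i]
      have h1 : D.latticeNorm (L i) (X ⟨0, by omega⟩) = ν i (X ⟨0, by omega⟩) := rfl
      rw [h1, hXν _ i]
      have hlastr : (⟨r, by omega⟩ : Fin (r+1)) = Fin.last r := rfl
      rw [hlastr, if_pos (Fin.le_last i)]
      by_cases h2 : i ≤ (⟨0, by omega⟩ : Fin (r+1))
      · rw [if_pos h2]; linarith
      · rw [if_neg h2]; linarith
    -- nonnegativity of A
    have hA_nonneg : ∀ k ≤ r, 0 ≤ A k := by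
      intro k hk
      simp only [hA]
      rcases Nat.eq_zero_or_pos k with rfl | hkpos
      · rw [if_pos rfl]
        apply div_nonneg (by linarith) (by linarith)
      · rw [if_neg (by omega)]
        apply div_nonneg _ (by linarith)
        have : CN k ≤ CN (k-1) := by
          have := hCmono (k-1) (by omega)
          rwa [Nat.sub_add_cancel hkpos] at this
        linarith
    -- telescoping
    have htel : ∀ s u : ℕ, s ≤ u → ∑ k ∈ Finset.Ico s u, (CN k - CN (k+1)) = CN s - CN u := by
      intro s u hsu
      induction u, hsu using Nat.le_induction with
      | base => simp
      | succ u hsu ih =>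
        rw [Finset.sum_Ico_succ_top hsu, ih]
        ring
    -- key identity
    have hkeyN : ∀ tn : ℕ, tn ≤ r →
        ∑ k ∈ Finset.range (r+1), A k * (if k ≤ tn then (1:ℝ) else q) = CN tn := by
      intro tn htn
      rw [Finset.range_eq_Ico, ← Finset.sum_Ico_consecutive _ (Nat.zero_le (tn+1)) (by omega)]
      have h1 : ∑ k ∈ Finset.Ico 0 (tn+1), A k * (if k ≤ tn then (1:ℝ) else q)
          = A 0 + (CN 0 - CN tn)/((q:ℝ)-1) := by
        have e1 : ∀ k ∈ Finset.Ico 0 (tn+1), A k * (if k ≤ tn then (1:ℝ) else q) = A k := by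
          intro k hk
          rw [Finset.mem_Ico] at hk
          rw [if_pos (by omega), mul_one]
        rw [Finset.sum_congr rfl e1]
        rw [← Finset.sum_Ico_consecutive _ (Nat.zero_le 1) (by omega : 1 ≤ tn+1)]
        have e2 : ∑ k ∈ Finset.Ico 0 1, A k = A 0 := by simp
        rw [e2]
        congr 1
        have e3 : ∀ k ∈ Finset.Ico 1 (tn+1), A k = (CN (k-1) - CN k)/((q:ℝ)-1) := by
          intro k hk
          rw [Finset.mem_Ico] at hk
          simp only [hA]
          rw [if_neg (by omega)]
        rw [Finset.sum_congr rfl e3]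
        rw [← Finset.sum_div]
        congr 1
        have e4 : ∑ k ∈ Finset.Ico 1 (tn+1), (CN (k-1) - CN k)
            = ∑ k ∈ Finset.Ico 0 tn, (CN k - CN (k+1)) := by
          rw [Finset.sum_Ico_eq_sum_range, Finset.sum_Ico_eq_sum_range]
          have hset : tn + 1 - 1 = tn - 0 := by omega
          rw [hset]
          apply Finset.sum_congr rfl
          intro k hk
          have e1' : 1 + k - 1 = k := by omega
          have e2' : 1 + k = k + 1 := by omega
          have e3' : 0 + k = k := by omega
          rw [e1', e2', e3']
        rw [e4, htel 0 tn (Nat.zero_le tn)]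
      have h2 : ∑ k ∈ Finset.Ico (tn+1) (r+1), A k * (if k ≤ tn then (1:ℝ) else q)
          = q * ((CN tn - CN r)/((q:ℝ)-1)) := by
        have e1 : ∀ k ∈ Finset.Ico (tn+1) (r+1), A k * (if k ≤ tn then (1:ℝ) else q)
            = q * ((CN (k-1) - CN k)/((q:ℝ)-1)) := by
          intro k hk
          rw [Finset.mem_Ico] at hk
          rw [if_neg (by omega)]
          simp only [hA]
          rw [if_neg (by omega)]
          ring
        rw [Finset.sum_congr rfl e1, ← Finset.mul_sum]
        congr 1
        rw [← Finset.sum_div]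
        congr 1
        have e4 : ∑ k ∈ Finset.Ico (tn+1) (r+1), (CN (k-1) - CN k)
            = ∑ k ∈ Finset.Ico tn r, (CN k - CN (k+1)) := by
          rw [Finset.sum_Ico_eq_sum_range, Finset.sum_Ico_eq_sum_range]
          have hrr : r + 1 - (tn + 1) = r - tn := by omega
          rw [hrr]
          apply Finset.sum_congr rfl
          intro k hk
          have e1' : tn + 1 + k - 1 = tn + k := by omega
          have e2' : tn + 1 + k = tn + k + 1 := by omega
          rw [e1', e2']
        rw [e4, htel tn r htn]
      rw [h1, h2]
      have hA0 : A 0 = (q * CN r - CN 0)/((q:ℝ)-1) := by simp [hA]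
      rw [hA0]
      field_simp
      ring
    -- assemble
    refine ⟨fun i => A i.val, fun i => hA_nonneg i.val (by omega), ?_⟩
    intro x
    rcases eq_or_ne x 0 with rfl | hx
    · rw [hμ0]
      have : ∀ i : Fin (r+1), D.latticeNorm (L i) (0 : Fin n → E) = 0 :=
        fun i => D.latticeNorm_zero (hlat i)
      simp [this]
    · obtain ⟨m, t, hmt⟩ := hclass x hx
      set z := (π ^ (-m)) • X t with hz
      have hπm : D.v (π ^ (-m)) = (q:ℝ)^m := by rw [hπ]; simp
      have hz0 : z ≠ 0 := smul_ne_zero (zpow_ne_zero _ hπ0) (hX0 _)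
      have hνz : ∀ i, ν i z = ν i x := by
        intro i
        have : ν i z = (q:ℝ)^m * ν i (X t) := by
          show D.latticeNorm (L i) z = _
          rw [hz, D.latticeNorm_smul (hlat i) (zpow_ne_zero _ hπ0), hπm]
        rw [this, hXν t i, hmt i]
      have hμeq : μ x = μ z := by
        refine le_antisymm (hcomp z x hz0 hx fun i => le_of_eq ?_)
          (hcomp x z hx hz0 fun i => le_of_eq ?_)
        · exact (hνz i).symm
        · exact hνz i
      have hμz : μ z = (q:ℝ)^m * C t := by rw [hz, hμ_smul, hπm]
      rw [hμeq, hμz]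
      have hsum : ∑ i : Fin (r+1), A i.val * D.latticeNorm (L i) x
          = (q:ℝ)^m * ∑ i : Fin (r+1), A i.val * (if i ≤ t then (1:ℝ) else q) := by
        rw [Finset.mul_sum]
        apply Finset.sum_congr rfl
        intro i _
        rw [show D.latticeNorm (L i) x = ν i x from rfl, hmt i]
        ring
      rw [hsum]
      congr 1
      -- convert Fin sum to range sum
      have hconv : ∑ i : Fin (r+1), A i.val * (if i ≤ t then (1:ℝ) else q)
          = ∑ k ∈ Finset.range (r+1), A k * (if k ≤ t.val then (1:ℝ) else q) := by
        rw [Finset.sum_range fun k => A k * (if k ≤ t.val then (1:ℝ) else q)]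
        exact Finset.sum_congr rfl fun i _ => by simp only [Fin.le_def]
      rw [hconv, hkeyN t.val (by omega), hCNval t.val (by omega)]
  · -- easy direction
    rintro ⟨a, ha, hsum⟩ x y hx hy hle
    rw [hsum x, hsum y]
    exact Finset.sum_le_sum fun i _ => mul_le_mul_of_nonneg_left (hle i) (ha i)
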